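/- Let k ≥ 1 be an integer and let η : {1,…,k} → {−1,+1} be any sign sequence. Then there exist unique real numbers b₀, b₁, …, b_{k+1} such that b₀ = 1, b_{k+1} = 0, and η(i)·b_i = (b_{i−1} + b_{i+1})/2 for every 1 ≤ i ≤ k. -/

import Mathlib

private def sol (η : ℕ → ℝ) (c0 c1 : ℝ) : ℕ → ℝ
  | 0 => c0
  | 1 => c1
  | (n+2) => 2 * η (n+1) * sol η c0 c1 (n+1) - sol η c0 c1 n

private lemma sol_lin (η : ℕ → ℝ) (c0 c1 : ℝ) (n : ℕ) :
    sol η c0 c1 n = c0 * sol η 1 0 n + c1 * sol η 0 1 n := by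
  induction n using Nat.strong_induction_on with
  | _ n ih =>
    match n with
    | 0 => simp [sol]
    | 1 => simp [sol]
    | (m+2) =>
      have h1 := ih (m+1) (by omega)
      have h0 := ih m (by omega)
      simp only [sol, h1, h0]; ring

private lemma sol_rec (η : ℕ → ℝ) (c0 c1 : ℝ) (i : ℕ) (hi : 1 ≤ i) :
    η i * sol η c0 c1 i = (sol η c0 c1 (i - 1) + sol η c0 c1 (i + 1)) / 2 := by
  obtain ⟨n, rfl⟩ : ∃ n, i = n + 1 := ⟨i - 1, by omega⟩
  have : sol η c0 c1 (n + 2) = 2 * η (n+1) * sol η c0 c1 (n+1) - sol η c0 c1 n := rfl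
  simp only [Nat.add_sub_cancel, this]
  ring

private lemma sol_growth (k : ℕ) (η : ℕ → ℝ)
    (hη : ∀ i, 1 ≤ i → i ≤ k → η i = 1 ∨ η i = -1) :
    ∀ n, 1 ≤ n → n ≤ k → |sol η 0 1 n| + 1 ≤ |sol η 0 1 (n + 1)| := by
  intro n
  induction n using Nat.strong_induction_on with
  | _ n ih =>
    intro hn1 hnk
    have hrec : sol η 0 1 (n + 1) = 2 * η n * sol η 0 1 n - sol η 0 1 (n - 1) := by
      obtain ⟨m, rfl⟩ : ∃ m, n = m + 1 := ⟨n - 1, by omega⟩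
      simp [sol]
    have habs : |η n| = 1 := by rcases hη n hn1 hnk with h | h <;> simp [h]
    match n, hn1 with
    | 1, _ =>
      have h0 : sol η 0 1 0 = 0 := rfl
      have h1 : sol η 0 1 1 = 1 := rfl
      rw [hrec]
      simp only [h0, h1]
      rw [show (2:ℝ) * η 1 * 1 - 0 = 2 * η 1 by ring, abs_mul]
      rw [habs]; norm_num
    | (m+2), _ =>
      have ihm := ih (m+1) (by omega) (by omega) (by omega)
      have key : 2 * |sol η 0 1 (m+2)| - |sol η 0 1 (m+1)| ≤ |sol η 0 1 (m+3)| := by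
        have : |2 * η (m+2) * sol η 0 1 (m+2)| = 2 * |sol η 0 1 (m+2)| := by
          rw [abs_mul, abs_mul, habs]; simp [abs_of_nonneg]
        calc 2 * |sol η 0 1 (m+2)| - |sol η 0 1 (m+1)|
            = |2 * η (m+2) * sol η 0 1 (m+2)| - |sol η 0 1 (m+1)| := by rw [this]
          _ ≤ |2 * η (m+2) * sol η 0 1 (m+2) - sol η 0 1 (m+1)| := by
              exact abs_sub_abs_le_abs_sub _ _
          _ = |sol η 0 1 (m+3)| := by
              congr 1
      have : |sol η 0 1 (m+1)| + 1 ≤ |sol η 0 1 (m+2)| := ihm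
      linarith

/-- For any sign sequence `η : {1,…,k} → {−1,+1}` there exist unique real numbers
`b 0, …, b (k+1)` with `b 0 = 1`, `b (k+1) = 0`, satisfying the sign recurrence. -/
theorem sign_recurrence_exists_unique_left_one_right_zero (k : ℕ) (hk : 1 ≤ k)
    (η : ℕ → ℝ) (hη : ∀ i, 1 ≤ i → i ≤ k → η i = 1 ∨ η i = -1) :
    ∃ b : ℕ → ℝ,
      (b 0 = 1 ∧ b (k + 1) = 0 ∧
        ∀ i, 1 ≤ i → i ≤ k → η i * b i = (b (i - 1) + b (i + 1)) / 2) ∧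
      ∀ b' : ℕ → ℝ,
        (b' 0 = 1 ∧ b' (k + 1) = 0 ∧
          ∀ i, 1 ≤ i → i ≤ k → η i * b' i = (b' (i - 1) + b' (i + 1)) / 2) →
        ∀ i, i ≤ k + 1 → b' i = b i := by
  set A : ℝ := sol η 1 0 (k + 1) with hA
  set B : ℝ := sol η 0 1 (k + 1) with hB
  have hBne : B ≠ 0 := by
    have := sol_growth k η hη k hk le_rfl
    have h0 := abs_nonneg (sol η 0 1 k)
    intro h
    rw [hB] at h
    rw [h] at this
    simp at this
    linarith
  set t : ℝ := -A / B with ht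
  refine ⟨sol η 1 t, ⟨rfl, ?_, fun i hi1 hik => sol_rec η 1 t i hi1⟩, ?_⟩
  · rw [sol_lin]
    rw [← hA, ← hB, ht]
    field_simp
    ring
  · rintro b' ⟨hb0, hbk, hbrec⟩
    -- b' agrees with sol η 1 (b' 1) up to k+1
    have hagree : ∀ i, i ≤ k + 1 → b' i = sol η 1 (b' 1) i := by
      intro i
      induction i using Nat.strong_induction_on with
      | _ i ih =>
        intro hi
        match i with
        | 0 => exact hb0
        | 1 => rfl
        | (m+2) =>
          have h1 := ih (m+1) (by omega) (by omega)
          have h0 := ih m (by omega) (by omega)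
          have hr := hbrec (m+1) (by omega) (by omega)
          simp only [Nat.add_sub_cancel] at hr
          have : b' (m+2) = 2 * η (m+1) * b' (m+1) - b' m := by linarith
          rw [this, h1, h0]
          rfl
    have hb1 : b' 1 = t := by
      have := hagree (k+1) le_rfl
      rw [hbk, sol_lin, ← hA, ← hB] at this
      have : b' 1 * B = -A := by linarith
      rw [ht]; field_simp; linarith
    intro i hi
    rw [hagree i hi, hb1]
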